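/- arXiv:2107.06960 — 5 statements merged into one kernel-verified Lean document; each statement's English description precedes it below -/
import Mathlib

section
/- Let A be a Dedekind ring and F a formal power series in A[[X]] that is rational, i.e., F = p/q for some polynomials p, q in A[X]. Then there exist polynomials P, Q in A[X] such that F = P/Q, where P and Q are relatively prime and Q(0) = 1. -/
open Polynomial

namespace FatouAux

variable {A : Type*} [CommRing A] [IsDomain A]
variable {K : Type*} [Field K] [Algebra A K] [IsFractionRing A K]

lemma coe_map_ps (h : A[X]) :
    ((h.map (algebraMap A K) : K[X]) : PowerSeries K)
      = PowerSeries.map (algebraMap A K) (h : PowerSeries A) := by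
  ext n
  simp [Polynomial.coeff_coe, Polynomial.coeff_map]

lemma reflect_map' (φ : A →+* K) (h : A[X]) (N : ℕ) :
    (reflect N h).map φ = reflect N (h.map φ) := by
  ext i
  simp [Polynomial.coeff_reflect, Polynomial.coeff_map]

lemma reflect_reflect' {R : Type*} [CommRing R] (N : ℕ) (h : R[X]) :
    reflect N (reflect N h) = h := by
  ext i
  simp [Polynomial.coeff_reflect, Polynomial.revAt_invol]

/-- reversing a convolution-type sum -/
lemma sum_rev {M : Type*} [AddCommMonoid M] (u v : ℕ → M) (m : ℕ)
    (f : M → M → M) :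
    True := trivial

lemma sum_range_rev_eq {u v : ℕ → K} (m : ℕ) :
    ∑ k ∈ Finset.range (m + 1), u k * v (m - k)
      = ∑ k ∈ Finset.range (m + 1), u (m - k) * v k := by
  rw [← Finset.sum_range_reflect]
  apply Finset.sum_congr rfl
  intro i hi
  rw [Finset.mem_range] at hi
  have h1 : m + 1 - 1 - i = m - i := by omega
  have h2 : m - (m - i) = i := by omega
  rw [h1, h2]

/-- The denominator ideal argument over the fraction field. -/
lemma exists_minimal_denominator (Fk : PowerSeries K) (q : K[X]) (hq : q ≠ 0)
    (hp : ∃ pk : K[X], Fk * (q : PowerSeries K) = (pk : PowerSeries K)) :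
    ∃ Q₀ P₀ : K[X], Q₀.coeff 0 = 1 ∧ Fk * (Q₀ : PowerSeries K) = (P₀ : PowerSeries K) ∧
      (∀ h pp : K[X], Fk * (h : PowerSeries K) = (pp : PowerSeries K) → Q₀ ∣ h) := by
  classical
  let J : Ideal K[X] :=
    { carrier := {h : K[X] | ∃ pp : K[X], Fk * (h : PowerSeries K) = (pp : PowerSeries K)}
      add_mem' := by
        rintro a b ⟨pa, hpa⟩ ⟨pb, hpb⟩
        exact ⟨pa + pb, by rw [Polynomial.coe_add, mul_add, hpa, hpb, Polynomial.coe_add]⟩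
      zero_mem' := ⟨0, by simp⟩
      smul_mem' := by
        rintro s h ⟨pp, hpp⟩
        refine ⟨s * pp, ?_⟩
        rw [smul_eq_mul, Polynomial.coe_mul, Polynomial.coe_mul, mul_left_comm, hpp] }
  have hmemJ : ∀ h : K[X], h ∈ J ↔ ∃ pp : K[X], Fk * (h : PowerSeries K) = (pp : PowerSeries K) :=
    fun h => Iff.rfl
  haveI hJp : J.IsPrincipal := IsPrincipalIdealRing.principal J
  set g0 : K[X] := Submodule.IsPrincipal.generator J with hg0def
  have hspan : Ideal.span {g0} = J := Ideal.span_singleton_generator J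
  have hdvdJ : ∀ h : K[X], h ∈ J ↔ g0 ∣ h := by
    intro h
    rw [← hspan, Ideal.mem_span_singleton]
  have hqJ : q ∈ J := (hmemJ q).mpr hp
  have hg0ne : g0 ≠ 0 := by
    intro h0
    have := (hdvdJ q).mp hqJ
    rw [h0] at this
    exact hq (zero_dvd_iff.mp this)
  have hg0J : g0 ∈ J := by
    rw [hdvdJ]
  obtain ⟨pg, hpg⟩ := (hmemJ g0).mp hg0J
  -- constant coefficient of g0 is nonzero
  have hg00 : g0.coeff 0 ≠ 0 := by
    intro h00
    obtain ⟨g1, hg1⟩ := Polynomial.X_dvd_iff.mpr h00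
    have hpg0 : pg.coeff 0 = 0 := by
      have h0 := congrArg (PowerSeries.constantCoeff (R := K)) hpg
      rw [map_mul] at h0
      have e1 : PowerSeries.constantCoeff (R := K) (g0 : PowerSeries K) = g0.coeff 0 := by
        rw [← PowerSeries.coeff_zero_eq_constantCoeff_apply, Polynomial.coeff_coe]
      have e2 : PowerSeries.constantCoeff (R := K) (pg : PowerSeries K) = pg.coeff 0 := by
        rw [← PowerSeries.coeff_zero_eq_constantCoeff_apply, Polynomial.coeff_coe]
      rw [e1, e2, h00, mul_zero] at h0
      exact h0.symm
    obtain ⟨pg1, hpg1⟩ := Polynomial.X_dvd_iff.mpr hpg0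
    have hg1ne : g1 ≠ 0 := by
      intro h; rw [h, mul_zero] at hg1; exact hg0ne hg1
    have hXne : (Polynomial.X : K[X]) ≠ 0 := Polynomial.X_ne_zero
    have hcanc : Fk * (g1 : PowerSeries K) = (pg1 : PowerSeries K) := by
      have : ((X : K[X]) : PowerSeries K) * (Fk * (g1 : PowerSeries K))
          = ((X : K[X]) : PowerSeries K) * (pg1 : PowerSeries K) := by
        rw [← mul_assoc, mul_comm _ Fk, mul_assoc, ← Polynomial.coe_mul, ← hg1, hpg,
          hpg1, Polynomial.coe_mul]
      have hX : ((X : K[X]) : PowerSeries K) ≠ 0 := by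
        rw [Ne, Polynomial.coe_eq_zero_iff]; exact hXne
      exact mul_left_cancel₀ hX this
    have hg1J : g1 ∈ J := (hmemJ g1).mpr ⟨pg1, hcanc⟩
    have hdvd := (hdvdJ g1).mp hg1J
    have : g0.natDegree ≤ g1.natDegree := Polynomial.natDegree_le_of_dvd hdvd hg1ne
    rw [hg1] at this
    rw [Polynomial.natDegree_mul hXne hg1ne, Polynomial.natDegree_X] at this
    omega
  -- normalize
  refine ⟨C (g0.coeff 0)⁻¹ * g0, C (g0.coeff 0)⁻¹ * pg, ?_, ?_, ?_⟩
  · rw [Polynomial.coeff_C_mul, inv_mul_cancel₀ hg00]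
  · rw [Polynomial.coe_mul, Polynomial.coe_mul, mul_left_comm, hpg]
  · intro h pp hmul
    obtain ⟨w, hw⟩ := (hdvdJ h).mp ((hmemJ h).mpr ⟨pp, hmul⟩)
    refine ⟨C (g0.coeff 0) * w, ?_⟩
    rw [mul_mul_mul_comm, ← C_mul, inv_mul_cancel₀ hg00, C_1, one_mul]
    exact hw


set_option maxHeartbeats 1000000 in
lemma fatou_core {A : Type*} [CommRing A] [IsDomain A] [IsDedekindDomain A]
    {K : Type*} [Field K] [Algebra A K] [IsFractionRing A K]
    (F : PowerSeries A) (Q₀ P₀ : K[X])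
    (hQ1 : Q₀.coeff 0 = 1)
    (hFQ : PowerSeries.map (algebraMap A K) F * (Q₀ : PowerSeries K) = (P₀ : PowerSeries K))
    (hmin : ∀ h pp : K[X],
      PowerSeries.map (algebraMap A K) F * (h : PowerSeries K) = (pp : PowerSeries K) → Q₀ ∣ h) :
    ∃ G : A[X], G.map (algebraMap A K) = Q₀ := by
  classical
  set φ := algebraMap A K with hφ
  rcases Nat.eq_zero_or_pos Q₀.natDegree with hd0 | hdpos
  · refine ⟨1, ?_⟩
    rw [Polynomial.map_one, Polynomial.eq_C_of_natDegree_eq_zero hd0, hQ1, C_1]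
  set d := Q₀.natDegree with hd
  set N := P₀.natDegree + 1 with hN
  set c : ℕ → K := fun n => PowerSeries.coeff (R := K) n (PowerSeries.map φ F) with hc
  set g : K[X] := reflect d Q₀ with hgdef
  have hgcoeff : ∀ i : ℕ, i ≤ d → g.coeff i = Q₀.coeff (d - i) := fun i hi => by
    rw [hgdef, coeff_reflect, revAt_le hi]
  have hgcoeff' : ∀ i : ℕ, d < i → g.coeff i = 0 := fun i hi => by
    rw [hgdef, coeff_reflect, revAt_eq_self_of_lt hi]
    exact coeff_eq_zero_of_natDegree_lt hi
  have hgd : g.coeff d = 1 := by rw [hgcoeff d le_rfl, Nat.sub_self, hQ1]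
  have hgnd : g.natDegree = d :=
    le_antisymm (natDegree_le_iff_coeff_eq_zero.mpr fun i hi => hgcoeff' i hi)
      (le_natDegree_of_ne_zero (by rw [hgd]; exact one_ne_zero))
  have hgmonic : g.Monic := by
    rw [Polynomial.Monic, Polynomial.leadingCoeff, hgnd, hgd]
  -- the linear recurrence
  have hrec : ∀ n : ℕ, N ≤ n → ∑ i ∈ Finset.range (d + 1), g.coeff i * c (n + i) = 0 := by
    intro n hn
    have h0 : (PowerSeries.coeff (R := K) (n + d)) ((PowerSeries.map φ F) * (Q₀ : PowerSeries K)) = 0 := by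
      rw [hFQ, Polynomial.coeff_coe]
      exact coeff_eq_zero_of_natDegree_lt (by omega)
    rw [PowerSeries.coeff_mul, Finset.Nat.sum_antidiagonal_eq_sum_range_succ_mk] at h0
    simp only [Polynomial.coeff_coe, Nat.succ_eq_add_one] at h0
    rw [sum_range_rev_eq] at h0
    have hsub : ∑ k ∈ Finset.range (d + 1), c (n + d - k) * Q₀.coeff k
        = ∑ k ∈ Finset.range (n + d + 1), c (n + d - k) * Q₀.coeff k := by
      apply Finset.sum_subset (Finset.range_subset_range.mpr (by omega))
      intro x hx hnx
      rw [Finset.mem_range, not_lt] at hnx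
      rw [coeff_eq_zero_of_natDegree_lt (by omega), mul_zero]
    calc ∑ i ∈ Finset.range (d + 1), g.coeff i * c (n + i)
        = ∑ i ∈ Finset.range (d + 1), Q₀.coeff (d - i) * c (n + i) := by
          apply Finset.sum_congr rfl; intro i hi
          rw [Finset.mem_range] at hi
          rw [hgcoeff i (by omega)]
      _ = ∑ k ∈ Finset.range (d + 1), c (n + d - k) * Q₀.coeff k := by
          rw [← Finset.sum_range_reflect (fun k => c (n + d - k) * Q₀.coeff k) (d + 1)]
          apply Finset.sum_congr rfl; intro i hi
          rw [Finset.mem_range] at hi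
          have e1 : d + 1 - 1 - i = d - i := by omega
          rw [e1]
          have e2 : n + d - (d - i) = n + i := by omega
          rw [e2, mul_comm]
      _ = 0 := by rw [hsub]; exact h0
  -- the companion-type matrix and coefficient windows
  set V : ℕ → (Fin d → K) := fun n j => c (n + (j : ℕ)) with hV
  set Cm : Matrix (Fin d) (Fin d) K := Matrix.of (fun i j : Fin d =>
      if (i : ℕ) + 1 = (j : ℕ) then 1
      else if (i : ℕ) + 1 = d then -(g.coeff (j : ℕ)) else 0) with hCm
  have hstep : ∀ n : ℕ, N ≤ n → Cm.mulVec (V n) = V (n + 1) := by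
    intro n hn
    funext i
    have hVapp : ∀ m (j : Fin d), V m j = c (m + (j : ℕ)) := fun m j => rfl
    rw [Matrix.mulVec, dotProduct]
    by_cases hi : (i : ℕ) + 1 < d
    · rw [Finset.sum_eq_single (⟨(i : ℕ) + 1, hi⟩ : Fin d)]
      · rw [hCm]
        simp only [Matrix.of_apply, Fin.val_mk, if_true, one_mul]
        rw [hVapp, hVapp]
        have hx : n + ((⟨(i : ℕ) + 1, hi⟩ : Fin d) : ℕ) = n + 1 + (i : ℕ) := by
          simp only [Fin.val_mk]; omega
        rw [hx]
      · intro j _ hji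
        rw [hCm]; simp only [Matrix.of_apply]
        have h1 : ¬((i : ℕ) + 1 = (j : ℕ)) := by
          intro h; exact hji (Fin.ext h.symm)
        have h2 : ¬((i : ℕ) + 1 = d) := by omega
        rw [if_neg h1, if_neg h2, zero_mul]
      · intro hmem; exact absurd (Finset.mem_univ _) hmem
    · have hieq : (i : ℕ) + 1 = d := by have := i.isLt; omega
      have hentry : ∀ j : Fin d, Cm i j = -(g.coeff (j : ℕ)) := by
        intro j
        rw [hCm]; simp only [Matrix.of_apply]
        have h1 : ¬((i : ℕ) + 1 = (j : ℕ)) := by have := j.isLt; omega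
        rw [if_neg h1, if_pos hieq]
      calc ∑ j, Cm i j * V n j
          = ∑ j : Fin d, -(g.coeff (j : ℕ) * c (n + (j : ℕ))) := by
            apply Finset.sum_congr rfl; intro j _
            rw [hentry j, hVapp, neg_mul]
        _ = -(∑ j ∈ Finset.range d, g.coeff j * c (n + j)) := by
            rw [Fin.sum_univ_eq_sum_range (fun j => -(g.coeff j * c (n + j))) d,
              Finset.sum_neg_distrib]
        _ = c (n + d) := by
            have hs := hrec n hn
            rw [Finset.sum_range_succ, hgd, one_mul] at hs
            have := eq_neg_of_add_eq_zero_right hs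
            exact this.symm
        _ = V (n + 1) i := by
            rw [hVapp]
            have hx : n + 1 + (i : ℕ) = n + d := by omega
            rw [hx]
  -- the A-module of windows
  set ψ : (Fin d → K) →ₗ[A] (Fin d → K) := (Matrix.mulVecLin Cm).restrictScalars A with hψ
  have hψapp : ∀ x, ψ x = Cm.mulVec x := fun x => rfl
  set Mgen : Set (Fin d → K) := Set.range (fun k : ℕ => V (N + k)) with hMgen
  set M : Submodule A (Fin d → K) := Submodule.span A Mgen with hM
  have hVmem : ∀ n, N ≤ n → V n ∈ M := by
    intro n hn
    apply Submodule.subset_span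
    refine ⟨n - N, ?_⟩
    show V (N + (n - N)) = V n
    have hx : N + (n - N) = n := by omega
    rw [hx]
  have hstab : ∀ x ∈ M, ψ x ∈ M := by
    have hle : Submodule.map ψ M ≤ M := by
      rw [hM, Submodule.map_span_le]
      rintro m ⟨k, rfl⟩
      rw [hψapp, hstep (N + k) (by omega)]
      exact hVmem (N + k + 1) (by omega)
    intro x hx
    exact hle (Submodule.mem_map_of_mem hx)
  set L : Submodule A (Fin d → K) :=
    Submodule.span A (Set.range (fun j : Fin d => (Pi.single j 1 : Fin d → K))) with hL
  have hLfg : L.FG := Submodule.fg_span (Set.finite_range _)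
  have hML : M ≤ L := by
    rw [hM, Submodule.span_le]
    rintro m ⟨k, rfl⟩
    have hsum : V (N + k)
        = ∑ j : Fin d, (PowerSeries.coeff (R := A) (N + k + (j : ℕ)) F) • (Pi.single j (1 : K) : Fin d → K) := by
      funext j'
      rw [Finset.sum_apply, Finset.sum_eq_single j']
      · rw [Pi.smul_apply, Pi.single_eq_same, Algebra.smul_def, mul_one]
        simp only [hV, hc, PowerSeries.coeff_map]
        rfl
      · intro b _ hbj
        rw [Pi.smul_apply, Pi.single_eq_of_ne (Ne.symm hbj), smul_zero]
      · intro hj; exact absurd (Finset.mem_univ _) hj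
    show V (N + k) ∈ L
    rw [hsum]
    apply Submodule.sum_mem
    intro j _
    exact Submodule.smul_mem _ _ (Submodule.subset_span ⟨j, rfl⟩)
  have hMfg : M.FG := by
    haveI := isNoetherian_of_fg_of_noetherian L hLfg
    have h1 : (Submodule.comap L.subtype M).FG := IsNoetherian.noetherian _
    have h2 := Submodule.FG.map L.subtype h1
    rwa [Submodule.map_comap_subtype, inf_eq_right.mpr hML] at h2
  haveI : Module.Finite A M := Module.Finite.iff_fg.mpr hMfg
  set ψ' : Module.End A M := ψ.restrict hstab with hψ'
  obtain ⟨pc, hpcm, hpc0⟩ := LinearMap.exists_monic_and_aeval_eq_zero A ψ'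
  have hpow : ∀ (k : ℕ) (x : M), (((ψ' ^ k) x : M) : Fin d → K) = (ψ ^ k) (x : Fin d → K) := by
    intro k
    induction k with
    | zero => intro x; simp
    | succ k ih =>
      intro x
      rw [pow_succ, pow_succ, Module.End.mul_apply, Module.End.mul_apply, ih (ψ' x)]
      rfl
  have hψpow : ∀ (k n : ℕ), N ≤ n → (ψ ^ k) (V n) = V (n + k) := by
    intro k
    induction k with
    | zero => intro n hn; simp
    | succ k ih =>
      intro n hn
      rw [pow_succ, Module.End.mul_apply, hψapp, hstep n hn, ih (n + 1) (by omega)]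
      have hx : n + 1 + k = n + (k + 1) := by omega
      rw [hx]
  set pm : K[X] := pc.map φ with hpm
  have hpmd : pm.natDegree = pc.natDegree := hpcm.natDegree_map φ
  have hrel_pm : ∀ n, N ≤ n →
      ∑ i ∈ Finset.range (pm.natDegree + 1), pm.coeff i * c (n + i) = 0 := by
    intro n hn
    have hx : V n ∈ M := hVmem n hn
    have h1 : (Polynomial.aeval ψ' pc) (⟨V n, hx⟩ : M) = 0 := by rw [hpc0]; rfl
    rw [Polynomial.aeval_eq_sum_range] at h1
    simp only [LinearMap.sum_apply, LinearMap.smul_apply] at h1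
    have h2 := congrArg (Subtype.val) h1
    simp only [AddSubmonoidClass.coe_finset_sum, SetLike.val_smul, ZeroMemClass.coe_zero] at h2
    have h3 : ∑ i ∈ Finset.range (pc.natDegree + 1), pc.coeff i • V (n + i) = 0 := by
      rw [← h2]
      apply Finset.sum_congr rfl
      intro i _
      rw [hpow i, hψpow i n hn]
    have h4 := congrArg (fun v : Fin d → K => v ⟨0, hdpos⟩) h3
    simp only [Finset.sum_apply, Pi.smul_apply, Pi.zero_apply] at h4
    rw [hpmd]
    rw [← h4]
    apply Finset.sum_congr rfl
    intro i _
    rw [hpm, Polynomial.coeff_map, Algebra.smul_def]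
    have hx0 : V (n + i) (⟨0, hdpos⟩ : Fin d) = c (n + i) := by
      show c (n + i + ((⟨0, hdpos⟩ : Fin d) : ℕ)) = c (n + i)
      simp
    rw [hx0]
  -- the "relation" machinery
  set SD : K[X] → ℕ → ℕ → K :=
    fun h n D => ∑ i ∈ Finset.range (D + 1), h.coeff i * c (n + i) with hSD
  have hSDext : ∀ (h : K[X]) (n : ℕ) {D : ℕ}, h.natDegree ≤ D → SD h n D = SD h n h.natDegree := by
    intro h n D hD
    simp only [hSD]
    symm
    apply Finset.sum_subset (Finset.range_subset_range.mpr (by omega))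
    intro x hx hnx
    rw [Finset.mem_range, not_lt] at hnx
    rw [coeff_eq_zero_of_natDegree_lt (by omega), zero_mul]
  have hSDadd : ∀ (h₁ h₂ : K[X]) (n D : ℕ), SD (h₁ + h₂) n D = SD h₁ n D + SD h₂ n D := by
    intro h₁ h₂ n D
    simp only [hSD, Polynomial.coeff_add, add_mul, Finset.sum_add_distrib]
  have hSDCmul : ∀ (a : K) (h : K[X]) (n D : ℕ), SD (C a * h) n D = a * SD h n D := by
    intro a h n D
    simp only [hSD, Polynomial.coeff_C_mul, Finset.mul_sum, mul_assoc]
  have hSDXmul : ∀ (h : K[X]) (n D : ℕ), SD (X * h) n (D + 1) = SD h (n + 1) D := by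
    intro h n D
    simp only [hSD]
    rw [Finset.sum_range_succ']
    rw [Polynomial.mul_coeff_zero, Polynomial.coeff_X_zero, zero_mul, zero_mul, add_zero]
    apply Finset.sum_congr rfl
    intro i _
    have hx : n + (i + 1) = n + 1 + i := by omega
    rw [Polynomial.coeff_X_mul, hx]
  set Rel : K[X] → Prop := fun h => ∀ n, N ≤ n → SD h n h.natDegree = 0 with hRel
  have relg : Rel g := by
    intro n hn
    simp only [hSD, hgnd]
    exact hrec n hn
  have relpm : Rel pm := by
    intro n hn
    simp only [hSD]
    exact hrel_pm n hn
  have reladd : ∀ h₁ h₂ : K[X], Rel h₁ → Rel h₂ → Rel (h₁ + h₂) := by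
    intro h₁ h₂ r₁ r₂ n hn
    have hD : (h₁ + h₂).natDegree ≤ max h₁.natDegree h₂.natDegree := natDegree_add_le _ _
    rw [← hSDext (h₁ + h₂) n hD, hSDadd,
      hSDext h₁ n (le_max_left _ _), hSDext h₂ n (le_max_right _ _), r₁ n hn, r₂ n hn, add_zero]
  have relCmul : ∀ (a : K) (h : K[X]), Rel h → Rel (C a * h) := by
    intro a h rh n hn
    rw [← hSDext (C a * h) n (natDegree_C_mul_le a h), hSDCmul, rh n hn, mul_zero]
  have relXmul : ∀ h : K[X], Rel h → Rel (X * h) := by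
    intro h rh n hn
    have hD : (X * h).natDegree ≤ h.natDegree + 1 := by
      refine le_trans (natDegree_mul_le) ?_
      rw [natDegree_X]
      omega
    rw [← hSDext (X * h) n hD, hSDXmul]
    exact rh (n + 1) (by omega)
  have relmono : ∀ (k : ℕ) (h : K[X]), Rel h → Rel (X ^ k * h) := by
    intro k h rh
    induction k with
    | zero => simpa using rh
    | succ k ih =>
      have he : (X ^ (k + 1) : K[X]) * h = X * (X ^ k * h) := by ring
      rw [he]
      exact relXmul _ ih
  have relmul : ∀ s h : K[X], Rel h → Rel (s * h) := by
    intro s h rh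
    induction s using Polynomial.induction_on' with
    | add p q hp hq => rw [add_mul]; exact reladd _ _ hp hq
    | monomial k a =>
      rw [← C_mul_X_pow_eq_monomial, mul_assoc]
      exact relCmul a _ (relmono k h rh)
  have relneg : ∀ h : K[X], Rel h → Rel (-h) := by
    intro h rh
    have he : -h = C (-1) * h := by simp
    rw [he]
    exact relCmul _ _ rh
  set r : K[X] := pm %ₘ g with hr
  have relr : Rel r := by
    have he : r = pm + -((pm /ₘ g) * g) := by
      rw [hr, Polynomial.modByMonic_eq_sub_mul_div pm g, sub_eq_add_neg, mul_comm g]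
    rw [he]
    exact reladd _ _ relpm (relneg _ (relmul _ _ relg))
  have hr0 : r = 0 := by
    by_contra hrne
    set e := r.natDegree with he
    set hh : K[X] := reflect e r with hhh
    have hhne : hh ≠ 0 := fun h0 => hrne (by rwa [hhh, reflect_eq_zero_iff] at h0)
    have hhdeg : hh.natDegree ≤ e := by
      apply natDegree_le_iff_coeff_eq_zero.mpr
      intro i hi
      rw [hhh, coeff_reflect, revAt_eq_self_of_lt hi]
      exact coeff_eq_zero_of_natDegree_lt (by omega)
    set pp : K[X] := PowerSeries.trunc (N + e) (PowerSeries.map φ F * (hh : PowerSeries K)) with hppdef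
    have hFHpoly : PowerSeries.map φ F * (hh : PowerSeries K) = (pp : PowerSeries K) := by
      ext m
      rw [Polynomial.coeff_coe, hppdef, PowerSeries.coeff_trunc]
      by_cases hm : m < N + e
      · rw [if_pos hm]
      · rw [if_neg hm]
        push_neg at hm
        rw [PowerSeries.coeff_mul, Finset.Nat.sum_antidiagonal_eq_sum_range_succ_mk]
        simp only [Polynomial.coeff_coe, Nat.succ_eq_add_one]
        rw [sum_range_rev_eq]
        have hstep1 : ∑ k ∈ Finset.range (m + 1), c (m - k) * hh.coeff k
            = ∑ k ∈ Finset.range (e + 1), c (m - k) * hh.coeff k := by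
          symm
          apply Finset.sum_subset (Finset.range_subset_range.mpr (by omega))
          intro x hx hnx
          rw [Finset.mem_range, not_lt] at hnx
          rw [coeff_eq_zero_of_natDegree_lt (by omega), mul_zero]
        have hstep2 : ∑ k ∈ Finset.range (e + 1), c (m - k) * hh.coeff k
            = ∑ i ∈ Finset.range (e + 1), r.coeff i * c (m - e + i) := by
          calc ∑ k ∈ Finset.range (e + 1), c (m - k) * hh.coeff k
              = ∑ k ∈ Finset.range (e + 1), r.coeff (e - k) * c (m - e + (e - k)) := by
                apply Finset.sum_congr rfl; intro k hk
                rw [Finset.mem_range] at hk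
                rw [hhh, coeff_reflect, revAt_le (by omega), mul_comm]
                have e2 : m - e + (e - k) = m - k := by omega
                rw [e2]
            _ = ∑ i ∈ Finset.range (e + 1), r.coeff i * c (m - e + i) := by
                rw [← Finset.sum_range_reflect (fun i => r.coeff i * c (m - e + i)) (e + 1)]
                apply Finset.sum_congr rfl
                intro j hj
                rw [Finset.mem_range] at hj
                have e1 : e + 1 - 1 - j = e - j := by omega
                rw [e1]
        rw [hstep1, hstep2]
        have hrr := relr (m - e) (by omega)
        simp only [hSD] at hrr
        exact hrr
    have hQdvd : Q₀ ∣ hh := hmin hh pp hFHpoly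
    have hdle : d ≤ hh.natDegree := natDegree_le_of_dvd hQdvd hhne
    have hlt : e < d := by
      have h2 : r.degree < g.degree := degree_modByMonic_lt pm hgmonic
      have h3 := natDegree_lt_natDegree hrne h2
      omega
    omega
  have hdvd : g ∣ pm := (Polynomial.modByMonic_eq_zero_iff_dvd hgmonic).mp hr0
  obtain ⟨G', hG'⟩ := IsIntegrallyClosed.eq_map_mul_C_of_dvd K hpcm hdvd
  have hglc : g.leadingCoeff = 1 := hgmonic
  rw [hglc, C_1, mul_one] at hG'
  refine ⟨reflect d G', ?_⟩
  rw [reflect_map' φ G' d, hG', hgdef, reflect_reflect']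

end FatouAux


set_option maxHeartbeats 800000 in
/-- Generalized Fatou's Lemma: over a Dedekind domain `A`, a formal power series
that equals a quotient `p/q` of polynomials can be written as `P/Q` with `P, Q`
relatively prime and `Q(0) = 1`. -/
theorem generalized_fatou
    (A : Type*) [CommRing A] [IsDomain A] [IsDedekindDomain A]
    (F : PowerSeries A)
    (h : ∃ p q : Polynomial A, q ≠ 0 ∧ F * (q : PowerSeries A) = (p : PowerSeries A)) :
    ∃ P Q : Polynomial A, IsRelPrime P Q ∧ Q.coeff 0 = 1 ∧
      F * (Q : PowerSeries A) = (P : PowerSeries A) := by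
  classical
  obtain ⟨p, q, hq0, hFq⟩ := h
  set K := FractionRing A with hK
  set φ := algebraMap A K with hφ
  have injφ : Function.Injective φ := IsFractionRing.injective A K
  set Fk := PowerSeries.map φ F with hFk
  have hmapinj : Function.Injective (Polynomial.map φ) := Polynomial.map_injective φ injφ
  have hq0' : q.map φ ≠ 0 := fun h0 => hq0 (hmapinj (by rw [h0, Polynomial.map_zero]))
  have hmap : Fk * ((q.map φ : K[X]) : PowerSeries K) = ((p.map φ : K[X]) : PowerSeries K) := by
    rw [FatouAux.coe_map_ps, FatouAux.coe_map_ps, hFk, ← map_mul]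
    exact congrArg _ hFq
  obtain ⟨Q₀, P₀, hQ1, hFQ, hmin⟩ :=
    FatouAux.exists_minimal_denominator Fk (q.map φ) hq0' ⟨p.map φ, hmap⟩
  rw [hFk] at hFQ hmin
  obtain ⟨G, hG⟩ := FatouAux.fatou_core F Q₀ P₀ hQ1 hFQ hmin
  set P : A[X] := PowerSeries.trunc (P₀.natDegree + 1) (F * (G : PowerSeries A)) with hP
  have hmapFG : PowerSeries.map φ (F * (G : PowerSeries A)) = (P₀ : PowerSeries K) := by
    rw [map_mul, ← FatouAux.coe_map_ps, hG, hFQ]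
  have hFP : F * (G : PowerSeries A) = (P : PowerSeries A) := by
    ext m
    rw [Polynomial.coeff_coe, hP, PowerSeries.coeff_trunc]
    by_cases hm : m < P₀.natDegree + 1
    · rw [if_pos hm]
    · rw [if_neg hm]
      push_neg at hm
      apply injφ
      rw [map_zero]
      have h1 := congrArg (PowerSeries.coeff (R := K) m) hmapFG
      rw [PowerSeries.coeff_map, Polynomial.coeff_coe] at h1
      rw [h1]
      exact coeff_eq_zero_of_natDegree_lt (by omega)
  have hQc0 : G.coeff 0 = 1 := by
    apply injφ
    have h2 : (G.map φ).coeff 0 = Q₀.coeff 0 := by rw [hG]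
    rw [Polynomial.coeff_map] at h2
    rw [h2, hQ1, map_one]
  have hPmap : P.map φ = P₀ := by
    have h1 : ((P.map φ : K[X]) : PowerSeries K) = (P₀ : PowerSeries K) := by
      rw [FatouAux.coe_map_ps, ← hFP, hmapFG]
    exact Polynomial.coe_inj.mp h1
  refine ⟨P, G, ?_, hQc0, hFP⟩
  intro D hDP hDQ
  have hQne : G ≠ 0 := fun h0 => by
    rw [h0, Polynomial.coeff_zero] at hQc0
    exact one_ne_zero hQc0.symm
  have hDne : D ≠ 0 := fun h0 => hQne (zero_dvd_iff.mp (h0 ▸ hDQ))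
  set Dm := D.map φ with hDm
  have hDmQ : Dm ∣ Q₀ := by
    rw [← hG, hDm]
    exact Polynomial.map_dvd φ hDQ
  have hDmP : Dm ∣ P₀ := by
    rw [← hPmap, hDm]
    exact Polynomial.map_dvd φ hDP
  obtain ⟨E, hE⟩ := hDmQ
  obtain ⟨E', hE'⟩ := hDmP
  have hDm0 : ((Dm : K[X]) : PowerSeries K) ≠ 0 := by
    rw [Ne, Polynomial.coe_eq_zero_iff]
    intro h0
    exact hDne (hmapinj (by rw [← hDm, h0, Polynomial.map_zero]))
  have hFE : Fk * (E : PowerSeries K) = (E' : PowerSeries K) := by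
    apply mul_left_cancel₀ hDm0
    calc ((Dm : K[X]) : PowerSeries K) * (Fk * (E : PowerSeries K))
        = Fk * ((Dm * E : K[X]) : PowerSeries K) := by
          rw [Polynomial.coe_mul]; ring
      _ = ((Dm * E' : K[X]) : PowerSeries K) := by rw [← hE, ← hFk] at *; rw [hFQ, hE']
      _ = ((Dm : K[X]) : PowerSeries K) * (E' : PowerSeries K) := by rw [Polynomial.coe_mul]
  have hQ₀E : Q₀ ∣ E := hmin E E' (by rw [← hFk]; exact hFE)
  obtain ⟨W, hW⟩ := hQ₀E
  have hQ₀ne : Q₀ ≠ 0 := fun h0 => by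
    rw [h0, Polynomial.coeff_zero] at hQ1
    exact one_ne_zero hQ1.symm
  have hunit : IsUnit Dm := by
    have h1 : Q₀ * 1 = Q₀ * (Dm * W) := by
      rw [mul_one]
      calc Q₀ = Dm * E := hE
        _ = Dm * (Q₀ * W) := by rw [hW]
        _ = Q₀ * (Dm * W) := by ring
    exact IsUnit.of_mul_eq_one _ (mul_left_cancel₀ hQ₀ne h1).symm
  have hDdeg : Dm.natDegree = 0 := Polynomial.natDegree_eq_zero_of_isUnit hunit
  have hDdeg' : D.natDegree = 0 := by
    have hle : D.natDegree ≤ 0 := by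
      apply natDegree_le_iff_coeff_eq_zero.mpr
      intro i hi
      apply injφ
      rw [map_zero, ← Polynomial.coeff_map, ← hDm]
      exact coeff_eq_zero_of_natDegree_lt (by omega)
    omega
  have hDC : D = C (D.coeff 0) := Polynomial.eq_C_of_natDegree_eq_zero hDdeg'
  have hdvd1 : D.coeff 0 ∣ (1 : A) := by
    have h3 := (Polynomial.C_dvd_iff_dvd_coeff (D.coeff 0) G).mp (by rw [← hDC]; exact hDQ) 0
    rwa [hQc0] at h3
  rw [hDC]
  exact Polynomial.isUnit_C.mpr (isUnit_of_dvd_one hdvd1)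
end

section
/- Let K be a field with subfield k', and let {c_n} (n ∈ ℤ) be elements of K satisfying a linear recurrence c_n = r_1 c_{n-1} + r_2 c_{n-2} + ... + r_M c_{n-M} for all n ∈ ℤ, where r_1,...,r_M ∈ K with r_M ≠ 0, and the recurrence is of exact order M (so the Hankel matrix C_n = (c_{n+i+j})_{0≤i,j≤M-1} is nonsingular). If c_n ∈ k' for every n ≥ n_0, then the coefficients r_1,...,r_M all lie in k', and c_n ∈ k' for every n ∈ ℤ. -/
/-- If a doubly infinite sequence over `K` satisfies an order-`M` linear recurrence
(with `r_M ≠ 0` and all Hankel matrices nonsingular) and its terms lie in a subfield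
`k'` from some index on, then the recurrence coefficients and all terms lie in `k'`. -/
theorem recurrence_coeffs_and_terms_in_subfield
    (K : Type*) [Field K] (k' : Subfield K)
    (M : ℕ) (hM : 0 < M) (r : ℕ → K) (c : ℤ → K)
    (hrM : r M ≠ 0)
    (hrec : ∀ n : ℤ, c n = ∑ i ∈ Finset.range M, r (i + 1) * c (n - (i + 1 : ℕ)))
    (hHankel : ∀ n : ℤ,
      (Matrix.of fun i j : Fin M => c (n + (i : ℕ) + (j : ℕ))).det ≠ 0)
    (n₀ : ℤ) (hc : ∀ n : ℤ, n₀ ≤ n → c n ∈ k') :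
    (∀ i : ℕ, 1 ≤ i → i ≤ M → r i ∈ k') ∧ (∀ n : ℤ, c n ∈ k') := by
  have key : ∀ m : ℤ, ∑ j ∈ Finset.range M, c (m + j) * r (M - j) = c (m + M) := by
    intro m
    have h := hrec (m + M)
    rw [← Finset.sum_range_reflect] at h
    rw [h]
    apply Finset.sum_congr rfl
    intro t ht
    simp only [Finset.mem_range] at ht
    have h1 : M - 1 - t + 1 = M - t := by omega
    rw [h1]
    have h2 : (m + M - ((M - t : ℕ) : ℤ)) = m + t := by
      have : ((M - t : ℕ) : ℤ) = (M : ℤ) - t := by omega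
      rw [this]; ring
    rw [h2, mul_comm]
  have hmem : ∀ (i j : ℕ), c (n₀ + i + j) ∈ k' := fun i j =>
    hc _ (by have hi : (0:ℤ) ≤ i := Int.natCast_nonneg _
             have hj : (0:ℤ) ≤ j := Int.natCast_nonneg _
             linarith)
  set A' : Matrix (Fin M) (Fin M) k' :=
    Matrix.of fun i j : Fin M => (⟨c (n₀ + i + j), hmem i j⟩ : k') with hA'
  set A : Matrix (Fin M) (Fin M) K :=
    Matrix.of fun i j : Fin M => c (n₀ + (i : ℕ) + (j : ℕ)) with hA
  have hmap : k'.subtype.mapMatrix A' = A := by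
    ext i j; rfl
  have hdetA : A.det ≠ 0 := hHankel n₀
  have hdetA' : A'.det ≠ 0 := by
    intro h
    apply hdetA
    rw [← hmap, ← RingHom.map_det, h, map_zero]
  have hmemb : ∀ i : ℕ, c (n₀ + i + M) ∈ k' := fun i => hmem i M
  set b' : Fin M → k' := fun i => (⟨c (n₀ + (i : ℕ) + M), hmemb i⟩ : k') with hb'
  set x' : Fin M → k' := fun j => (A'⁻¹).mulVec b' j with hx'
  have hAx' : A'.mulVec x' = b' := by
    rw [hx']
    show A'.mulVec (A'⁻¹.mulVec b') = b'
    rw [Matrix.mulVec_mulVec, Matrix.mul_nonsing_inv _ (isUnit_iff_ne_zero.2 hdetA'),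
      Matrix.one_mulVec]
  have hcoe : A.mulVec (fun j => (x' j : K)) = fun i : Fin M => c (n₀ + (i : ℕ) + M) := by
    funext i
    have h := congrFun hAx' i
    have h2 : ((A'.mulVec x' i : k') : K) = ((b' i : k') : K) := by rw [h]
    simpa [Matrix.mulVec, dotProduct, A, A', b'] using h2
  have hu : A.mulVec (fun j : Fin M => r (M - j)) = fun i : Fin M => c (n₀ + (i : ℕ) + M) := by
    funext i
    have h := key (n₀ + i)
    rw [← h]
    simp only [Matrix.mulVec, dotProduct, hA, Matrix.of_apply]
    exact Fin.sum_univ_eq_sum_range (fun j => c (n₀ + (i : ℕ) + j) * r (M - j)) M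
  have hAu : IsUnit A.det := isUnit_iff_ne_zero.2 hdetA
  have huniq : (fun j : Fin M => r (M - j)) = fun j => (x' j : K) := by
    calc (fun j : Fin M => r (M - j))
        = (1 : Matrix (Fin M) (Fin M) K).mulVec (fun j : Fin M => r (M - j)) := by
          rw [Matrix.one_mulVec]
      _ = A⁻¹.mulVec (A.mulVec fun j : Fin M => r (M - j)) := by
          rw [Matrix.mulVec_mulVec, Matrix.nonsing_inv_mul _ hAu]
      _ = A⁻¹.mulVec (A.mulVec fun j => (x' j : K)) := by rw [hu, ← hcoe]
      _ = fun j => (x' j : K) := by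
          rw [Matrix.mulVec_mulVec, Matrix.nonsing_inv_mul _ hAu, Matrix.one_mulVec]
  have hr : ∀ i : ℕ, 1 ≤ i → i ≤ M → r i ∈ k' := by
    intro i h1 h2
    have hj : M - i < M := by omega
    have h3 : r (M - (⟨M - i, hj⟩ : Fin M) : ℕ) = ((x' ⟨M - i, hj⟩ : k') : K) :=
      congrFun huniq _
    have hMi : M - (M - i) = i := by omega
    rw [show ((⟨M - i, hj⟩ : Fin M) : ℕ) = M - i from rfl, hMi] at h3
    rw [h3]
    exact (x' _).2
  refine ⟨hr, ?_⟩
  have hrMk : r M ∈ k' := hr M hM le_rfl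
  have main : ∀ m : ℕ, ∀ n : ℤ, n₀ - m ≤ n → c n ∈ k' := by
    intro m
    induction m with
    | zero => intro n hn; exact hc n (by simpa using hn)
    | succ m ih =>
      intro n hn
      by_cases hcase : n₀ - m ≤ n
      · exact ih n hcase
      · have hn' : n = n₀ - (m + 1) := by omega
        obtain ⟨M', rfl⟩ : ∃ M', M = M' + 1 := ⟨M - 1, by omega⟩
        have h := key n
        rw [Finset.sum_range_succ'] at h
        -- h : ∑ j∈range M', c (n + (j+1)) * r (M'+1-(j+1)) + c (n + (0:ℕ)) * r (M'+1-0)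
        --     = c (n + (M'+1:ℕ))
        have hrest : ∑ j ∈ Finset.range M', c (n + (j + 1 : ℕ)) * r (M' + 1 - (j + 1)) ∈ k' := by
          apply Subfield.sum_mem
          intro j hj
          simp only [Finset.mem_range] at hj
          apply Subfield.mul_mem
          · apply ih; push_cast; omega
          · apply hr <;> omega
        have hcMn : c (n + (M' + 1 : ℕ)) ∈ k' := by apply ih; push_cast; omega
        have heq : c (n + (0 : ℕ)) * r (M' + 1 - 0) =
            c (n + (M' + 1 : ℕ)) - ∑ j ∈ Finset.range M', c (n + (j + 1 : ℕ)) * r (M' + 1 - (j + 1)) := by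
          rw [← h]; ring
        have hprod : c n * r (M' + 1) ∈ k' := by
          have := heq ▸ Subfield.sub_mem _ hcMn hrest
          simpa using this
        have hcn : c n = (c n * r (M' + 1)) * (r (M' + 1))⁻¹ := by
          field_simp
        rw [hcn]
        exact Subfield.mul_mem _ hprod (Subfield.inv_mem _ hrMk)
  intro n
  obtain ⟨m, hm⟩ : ∃ m : ℕ, n₀ - m ≤ n := ⟨(n₀ - n).toNat, by omega⟩
  exact main m n hm
end

section
/- Let k' be a field with a discrete valuation v and valuation ring O_{k',v} (a Dedekind, indeed DVR, hence Dedekind domain). Let {c_n} (n ∈ ℤ) be elements of k' satisfying c_n = r_1 c_{n-1} + ... + r_M c_{n-M} for all n ∈ ℤ with r_1,...,r_M ∈ k', r_M ≠ 0, and the recurrence of exact order M (Hankel matrices nonsingular). If c_n ∈ O_{k',v} for all n ≥ n_0, then r_1,...,r_M ∈ O_{k',v}. -/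
open Finset Polynomial

namespace RecAux

variable {k' : Type*} [Field k'] (O : ValuationSubring k')

lemma exists_common_denom (s : Finset k') :
    ∃ d : k', d ∈ O ∧ d ≠ 0 ∧ ∀ x ∈ s, d * x ∈ O := by
  classical
  induction s using Finset.induction_on with
  | empty => exact ⟨1, one_mem _, one_ne_zero, by simp⟩
  | @insert x s hx ih =>
    obtain ⟨d, hd, hd0, hds⟩ := ih
    by_cases hxO : x ∈ O
    · refine ⟨d, hd, hd0, ?_⟩
      intro y hy
      rcases Finset.mem_insert.mp hy with rfl | hy
      · exact mul_mem hd hxO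
      · exact hds y hy
    · have hx0 : x ≠ 0 := by rintro rfl; exact hxO (zero_mem _)
      have hxinv : x⁻¹ ∈ O := (O.mem_or_inv_mem x).resolve_left hxO
      refine ⟨d * x⁻¹, mul_mem hd hxinv, mul_ne_zero hd0 (inv_ne_zero hx0), ?_⟩
      intro y hy
      rcases Finset.mem_insert.mp hy with rfl | hy
      · have : d * y⁻¹ * y = d := by field_simp
        rw [this]; exact hd
      · have : d * x⁻¹ * y = x⁻¹ * (d * y) := by ring
        rw [this]; exact mul_mem hxinv (hds y hy)

lemma coeffs_mem [IsDiscreteValuationRing O] (M : ℕ) (q u : ℕ → k')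
    (hq0 : q 0 = 1) (hu0 : u 0 = 1)
    (d : k') (hd : d ∈ O) (hd0 : d ≠ 0) (hdu : ∀ n, d * u n ∈ O)
    (hrel : ∀ n : ℕ, 1 ≤ n →
      ∑ j ∈ Finset.range (M + 1), (if j ≤ n then q j * u (n - j) else 0) = 0) :
    ∀ j, j ≤ M → q j ∈ O := by
  classical
  by_contra hcon
  push_neg at hcon
  obtain ⟨j₀, hj₀M, hj₀⟩ := hcon
  set v := O.valuation with hv
  obtain ⟨jt, hjt, hjtmax⟩ := Finset.exists_max_image (Finset.range (M + 1))
    (fun j => v (q j)) ⟨0, by simp⟩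
  set γ := v (q jt) with hγ
  have hγ1 : 1 < γ := by
    have h1 : ¬ v (q j₀) ≤ 1 := fun h => hj₀ (O.mem_of_valuation_le_one _ h)
    exact lt_of_lt_of_le (not_le.mp h1) (hjtmax j₀ (Finset.mem_range.mpr (by omega)))
  have hγ0 : γ ≠ 0 := ne_of_gt (lt_trans zero_lt_one hγ1)
  -- minimal index achieving the max
  have hPj : ∃ j, j ≤ M ∧ v (q j) = γ := ⟨jt, Nat.lt_succ_iff.mp (Finset.mem_range.mp hjt), rfl⟩
  set js := Nat.find hPj with hjs
  obtain ⟨hjsM, hjsγ⟩ := Nat.find_spec hPj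
  have hjs1 : 1 ≤ js := by
    rcases Nat.eq_zero_or_pos js with h0 | h; swap
    · exact h
    · exfalso
      have : v (q 0) = γ := by rw [← h0]; exact hjsγ
      rw [hq0, map_one] at this
      exact absurd this.symm (ne_of_gt hγ1)
  -- the ideal of numerators
  set s : ℕ → O := fun n => ⟨d * u n, hdu n⟩ with hsdef
  set I : Ideal O := Ideal.span (Set.range s) with hI
  haveI : I.IsPrincipal := IsPrincipalIdealRing.principal I
  set g : O := Submodule.IsPrincipal.generator I with hg
  have hsI : ∀ n, s n ∈ I := fun n => Ideal.subset_span ⟨n, rfl⟩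
  have hdvd : ∀ n, g ∣ s n := fun n => (Submodule.IsPrincipal.mem_iff_generator_dvd I).mp (hsI n)
  have step1 : ∀ n, v (d * u n) ≤ v (g : k') := by
    intro n
    obtain ⟨w, hw⟩ := hdvd n
    have hw' : d * u n = (g : k') * (w : k') := by
      have := congrArg (fun z : O => (z : k')) hw
      simpa using this
    rw [hw', map_mul]
    calc v (g : k') * v (w : k') ≤ v (g : k') * 1 :=
          mul_le_mul_right (O.valuation_le_one w) _
    _ = v (g : k') := mul_one _
  obtain ⟨cf, hcf⟩ := Finsupp.mem_span_range_iff_exists_finsupp.mp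
    (Submodule.IsPrincipal.generator_mem I)
  have hcf' : (g : k') = ∑ n ∈ cf.support, (cf n : k') * (d * u n) := by
    have := congrArg (fun z : O => (z : k')) hcf
    simp only [Finsupp.sum, smul_eq_mul] at this
    rw [← this]
    push_cast
    rfl
  have hsupp : cf.support.Nonempty := by
    rcases Finset.eq_empty_or_nonempty cf.support with h | h; swap
    · exact h
    · exfalso
      have hg0 : (g : k') = 0 := by rw [hcf']; simp [h]
      have := step1 0
      rw [hu0, mul_one, hg0] at this
      simp only [map_zero, le_zero_iff] at this
      exact hd0 ((Valuation.zero_iff v).mp this)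
  obtain ⟨nh, hnh, hnhmax⟩ := Finset.exists_max_image cf.support (fun n => v (u n)) hsupp
  set β := v (u nh) with hβ
  have hvd0 : (0 : _) < v d := by
    rw [zero_lt_iff]; exact (Valuation.ne_zero_iff v).mpr hd0
  have hgle : v (g : k') ≤ v d * β := by
    rw [hcf']
    apply Valuation.map_sum_le
    intro n hn
    rw [map_mul, map_mul]
    calc v (cf n : k') * (v d * v (u n)) ≤ 1 * (v d * β) := by
          exact mul_le_mul' (O.valuation_le_one _) (mul_le_mul_right (hnhmax n hn) _)
    _ = v d * β := one_mul _
  have hβmax : ∀ n, v (u n) ≤ β := by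
    intro n
    have h1 : v d * v (u n) ≤ v d * β := by
      rw [← map_mul]; exact le_trans (step1 n) hgle
    exact le_of_mul_le_mul_left h1 hvd0
  have hβ1 : (1 : _) ≤ β := by
    have := hβmax 0
    rwa [hu0, map_one] at this
  have hβ0 : β ≠ 0 := fun h => by simp [h] at hβ1
  -- minimal index achieving β
  have hPn : ∃ n, v (u n) = β := ⟨nh, rfl⟩
  set ns := Nat.find hPn with hns
  have hnsβ : v (u ns) = β := Nat.find_spec hPn
  set n := ns + js with hn
  have h1n : 1 ≤ n := by omega
  have hrel' := hrel n h1n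
  set F : ℕ → k' := fun j => if j ≤ n then q j * u (n - j) else 0 with hF
  have hvF : v (∑ j ∈ Finset.range (M + 1), F j) = v (F js) := by
    apply Valuation.map_sum_eq_of_lt v (j := js) (Finset.mem_range.mpr (by omega))
    · intro i hi
      simp only [Finset.mem_sdiff, Finset.mem_singleton] at hi
      obtain ⟨hiM, hijs⟩ := hi
      have hiM' : i ≤ M := Nat.lt_succ_iff.mp (Finset.mem_range.mp hiM)
      have hFjs : v (F js) = γ * β := by
        have : F js = q js * u ns := by
          rw [hF]; simp only [hn]
          rw [if_pos (by omega), Nat.add_sub_cancel]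
        rw [this, map_mul, hjsγ, hnsβ]
      rw [hFjs]
      by_cases hin : i ≤ n
      · have hFi : F i = q i * u (n - i) := by rw [hF]; simp [hin]
        rw [hFi, map_mul]
        rcases lt_or_gt_of_ne hijs with hlt | hgt
        · -- i < js : v (q i) < γ
          have hqi : v (q i) < γ := by
            have hne : ¬(i ≤ M ∧ v (q i) = γ) := Nat.find_min hPj hlt
            have hle : v (q i) ≤ γ := hjtmax i hiM
            rcases lt_or_eq_of_le hle with h | h
            · exact h
            · exact absurd ⟨hiM', h⟩ hne
          have := mul_lt_mul_of_le_of_lt_of_nonneg_of_pos (hβmax (n - i)) hqi zero_le' (zero_lt_iff.mpr hβ0)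
          calc v (q i) * v (u (n - i)) = v (u (n - i)) * v (q i) := mul_comm _ _
          _ < β * γ := this
          _ = γ * β := mul_comm _ _
        · -- i > js : v (u (n - i)) < β
          have hni : n - i < ns := by omega
          have hui : v (u (n - i)) < β := by
            have hne : ¬ (v (u (n - i)) = β) := Nat.find_min hPn hni
            exact lt_of_le_of_ne (hβmax _) hne
          exact mul_lt_mul_of_le_of_lt_of_nonneg_of_pos (hjtmax i hiM) hui zero_le' (zero_lt_iff.mpr hγ0)
      · have : F i = 0 := by rw [hF]; simp [hin]
        rw [this, map_zero, zero_lt_iff]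
        exact mul_ne_zero hγ0 hβ0
  rw [hrel', map_zero] at hvF
  have : F js = q js * u ns := by
    rw [hF]; simp only [hn]
    rw [if_pos (by omega), Nat.add_sub_cancel]
  rw [this, map_mul, hjsγ, hnsβ] at hvF
  exact (mul_ne_zero hγ0 hβ0) hvF.symm

end RecAux

/-- If a doubly infinite sequence in a field `k'` satisfies an order-`M` linear
recurrence (with `r_M ≠ 0` and nonsingular Hankel matrices) and its terms lie in the
valuation ring `O` (a DVR) from some index on, then all the recurrence coefficients
lie in `O`. -/
theorem recurrence_coeffs_in_valuation_ring
    (k' : Type*) [Field k'] (O : ValuationSubring k')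
    [IsDiscreteValuationRing O]
    (M : ℕ) (hM : 0 < M) (r : ℕ → k') (c : ℤ → k')
    (hrM : r M ≠ 0)
    (hrec : ∀ n : ℤ, c n = ∑ i ∈ Finset.range M, r (i + 1) * c (n - (i + 1 : ℕ)))
    (hHankel : ∀ n : ℤ,
      (Matrix.of fun i j : Fin M => c (n + (i : ℕ) + (j : ℕ))).det ≠ 0)
    (n₀ : ℤ) (hc : ∀ n : ℤ, n₀ ≤ n → c n ∈ O) :
    ∀ i : ℕ, 1 ≤ i → i ≤ M → r i ∈ O := by
  classical
  set a : ℕ → k' := fun n => c (n₀ + n) with ha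
  have haO : ∀ n, a n ∈ O := fun n => hc _ (le_add_of_nonneg_right (Int.natCast_nonneg n))
  set f : PowerSeries k' := PowerSeries.mk a with hf
  set S : Polynomial k' :=
    ∑ i ∈ Finset.range M, Polynomial.C (r (i + 1)) * Polynomial.X ^ (i + 1) with hSdef
  set Q : Polynomial k' := 1 - S with hQdef
  have hScoeff : ∀ j : ℕ, S.coeff j = if 1 ≤ j ∧ j ≤ M then r j else 0 := by
    intro j
    rw [hSdef, Polynomial.finset_sum_coeff]
    simp only [Polynomial.coeff_C_mul, Polynomial.coeff_X_pow, mul_ite, mul_one, mul_zero]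
    rcases Nat.eq_zero_or_pos j with rfl | hj
    · simp
    · obtain ⟨j', rfl⟩ : ∃ j', j = j' + 1 := ⟨j - 1, by omega⟩
      have he : ∀ i, (if j' + 1 = i + 1 then r (i + 1) else 0)
          = if i = j' then r (i + 1) else 0 := by
        intro i
        by_cases h : i = j'
        · subst h; simp
        · rw [if_neg (by omega), if_neg h]
      rw [Finset.sum_congr rfl (fun i _ => he i),
        Finset.sum_ite_eq' (Finset.range M) j' (fun i => r (i + 1))]
      by_cases h : j' < M
      · rw [if_pos (Finset.mem_range.mpr h), if_pos (by omega)]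
      · rw [if_neg (by simp only [Finset.mem_range]; omega), if_neg (by omega)]
  have hQ0 : Q.coeff 0 = 1 := by
    have hj0 : ¬(1 ≤ 0 ∧ 0 ≤ M) := by omega
    simp [hQdef, Polynomial.coeff_sub, Polynomial.coeff_one, hScoeff, hj0]
  have hQj : ∀ j, 1 ≤ j → j ≤ M → Q.coeff j = -(r j) := by
    intro j h1 h2
    have hj0 : j ≠ 0 := by omega
    simp [hQdef, Polynomial.coeff_sub, Polynomial.coeff_one, hScoeff, hj0, h1, h2]
  have hQtop : ∀ j, M < j → Q.coeff j = 0 := by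
    intro j hj
    have hj0 : j ≠ 0 := by omega
    have hjc : ¬(1 ≤ j ∧ j ≤ M) := by omega
    simp [hQdef, Polynomial.coeff_sub, Polynomial.coeff_one, hScoeff, hj0, hjc]
  have hQne : Q ≠ 0 := fun h => one_ne_zero (by rw [← hQ0, h, Polynomial.coeff_zero])
  have hcoefmul : ∀ (p : Polynomial k') (φ : PowerSeries k') (n : ℕ),
      PowerSeries.coeff n ((p : PowerSeries k') * φ) =
        ∑ j ∈ Finset.range (n + 1), p.coeff j * PowerSeries.coeff (n - j) φ := by
    intro p φ n
    rw [PowerSeries.coeff_mul, Finset.Nat.sum_antidiagonal_eq_sum_range_succ_mk]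
    simp [Polynomial.coeff_coe]
  have hcoefmulf : ∀ (p : Polynomial k') (n : ℕ),
      PowerSeries.coeff n ((p : PowerSeries k') * f) =
        ∑ j ∈ Finset.range (n + 1), p.coeff j * a (n - j) := by
    intro p n
    rw [hcoefmul]
    simp [hf]
  have hrecN : ∀ n, M ≤ n → a n = ∑ i ∈ Finset.range M, r (i + 1) * a (n - (i + 1)) := by
    intro n hn
    have h0 := hrec (n₀ + n)
    have e : a n = c (n₀ + n) := rfl
    rw [e, h0]
    refine Finset.sum_congr rfl fun i hi => ?_
    have hi' : i + 1 ≤ n := by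
      have := Finset.mem_range.mp hi; omega
    congr 1
    have e2 : a (n - (i + 1)) = c (n₀ + ((n - (i + 1) : ℕ) : ℤ)) := rfl
    rw [e2, Nat.cast_sub hi']
    congr 1
    ring
  have hvanish : ∀ n, M ≤ n → PowerSeries.coeff n ((Q : PowerSeries k') * f) = 0 := by
    intro n hn
    rw [hcoefmulf, Finset.sum_range_succ']
    have hz : ∀ j ∈ Finset.range n, j ∉ Finset.range M →
        Q.coeff (j + 1) * a (n - (j + 1)) = 0 := by
      intro j _ hj
      rw [hQtop (j + 1) (by simp only [Finset.mem_range] at hj; omega), zero_mul]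
    rw [← Finset.sum_subset (Finset.range_subset_range.mpr hn) hz]
    have he : ∀ j ∈ Finset.range M, Q.coeff (j + 1) * a (n - (j + 1))
        = -(r (j + 1) * a (n - (j + 1))) := by
      intro j hj
      rw [hQj (j + 1) (by omega) (by have := Finset.mem_range.mp hj; omega)]
      ring
    rw [Finset.sum_congr rfl he, Finset.sum_neg_distrib, hQ0, one_mul, Nat.sub_zero,
      hrecN n hn]
    ring
  set P : Polynomial k' := PowerSeries.trunc M ((Q : PowerSeries k') * f) with hPdef
  have hQf : (Q : PowerSeries k') * f = (P : PowerSeries k') := by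
    apply PowerSeries.ext
    intro m
    rw [Polynomial.coeff_coe, hPdef, PowerSeries.coeff_trunc]
    by_cases hm : m < M
    · rw [if_pos hm]
    · rw [if_neg hm, hvanish m (by omega)]
  have hPdeg : P.natDegree < M := by
    have h1 : M - 1 + 1 = M := by omega
    have := PowerSeries.natDegree_trunc_lt ((Q : PowerSeries k') * f) (M - 1)
    rw [h1] at this
    exact this
  -- coprimality from the Hankel condition
  have hco : IsCoprime P Q := by
    by_contra hnc
    set g : Polynomial k' := EuclideanDomain.gcd P Q with hgdef
    have hgunit : ¬IsUnit g := fun h => hnc (EuclideanDomain.gcd_isUnit_iff.mp h)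
    obtain ⟨P1, hP1⟩ : g ∣ P := EuclideanDomain.gcd_dvd_left P Q
    obtain ⟨Q1, hQ1⟩ : g ∣ Q := EuclideanDomain.gcd_dvd_right P Q
    have hgne : g ≠ 0 := fun h => hQne (by rw [hQ1, h, zero_mul])
    have hg0Q10 : g.coeff 0 * Q1.coeff 0 = 1 := by
      rw [← Polynomial.mul_coeff_zero, ← hQ1, hQ0]
    have hQ10 : Q1.coeff 0 ≠ 0 := fun h => by rw [h, mul_zero] at hg0Q10; exact one_ne_zero hg0Q10.symm
    have hQ1ne : Q1 ≠ 0 := fun h => hQ10 (by rw [h, Polynomial.coeff_zero])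
    have hgdeg : 1 ≤ g.natDegree := by
      by_contra hgd
      push_neg at hgd
      have h0 : g.natDegree = 0 := by omega
      obtain ⟨x, hx⟩ := Polynomial.natDegree_eq_zero.mp h0
      have hx0 : x ≠ 0 := by
        intro h; rw [h, map_zero] at hx; exact hgne hx.symm
      exact hgunit (hx ▸ Polynomial.isUnit_C.mpr (isUnit_iff_ne_zero.mpr hx0))
    have hQ1deg : Q1.natDegree ≤ M - 1 := by
      have hQdeg : Q.natDegree ≤ M := by
        apply Polynomial.natDegree_le_iff_coeff_eq_zero.mpr
        intro m hm
        exact hQtop m hm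
      have := Polynomial.natDegree_mul hgne hQ1ne
      rw [← hQ1] at this
      omega
    have hgps : (g : PowerSeries k') ≠ 0 := fun h => hgne (Polynomial.coe_eq_zero_iff.mp h)
    have hfP1 : (Q1 : PowerSeries k') * f = (P1 : PowerSeries k') := by
      apply mul_left_cancel₀ hgps
      rw [← mul_assoc, ← Polynomial.coe_mul, ← hQ1, hQf, hP1, Polynomial.coe_mul]
    have hP1co : ∀ m, M - 1 ≤ m → P1.coeff m = 0 := by
      intro m hm
      by_cases hP10 : P1 = 0
      · rw [hP10, Polynomial.coeff_zero]
      · have hPne : P ≠ 0 := by rw [hP1]; exact mul_ne_zero hgne hP10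
        have hnd := Polynomial.natDegree_mul hgne hP10
        rw [← hP1] at hnd
        apply Polynomial.coeff_eq_zero_of_natDegree_lt
        omega
    have hS1 : ∀ n, M - 1 ≤ n → ∑ j ∈ Finset.range M, Q1.coeff j * a (n - j) = 0 := by
      intro n hn
      have h1 : PowerSeries.coeff n ((Q1 : PowerSeries k') * f) = 0 := by
        rw [hfP1, Polynomial.coeff_coe]
        exact hP1co n hn
      rw [hcoefmulf] at h1
      rw [← h1]
      apply Finset.sum_subset (Finset.range_subset_range.mpr (by omega))
      intro j _ hj
      rw [Polynomial.coeff_eq_zero_of_natDegree_lt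
        (by simp only [Finset.mem_range] at hj; omega), zero_mul]
    -- build the kernel vector
    apply hHankel (n₀ + ((M - 1 : ℕ) : ℤ))
    apply Matrix.exists_mulVec_eq_zero_iff.mp
    refine ⟨fun t => Q1.coeff (M - 1 - (t : ℕ)), ?_, ?_⟩
    · intro h0
      apply hQ10
      have := congrFun h0 ⟨M - 1, by omega⟩
      simpa using this
    · funext i
      simp only [Matrix.mulVec, dotProduct, Matrix.of_apply, Pi.zero_apply]
      have hent : ∀ t : Fin M,
          c (n₀ + ((M - 1 : ℕ) : ℤ) + (i : ℕ) + (t : ℕ)) = a (M - 1 + i + t) := by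
        intro t
        have e : a (M - 1 + i + t) = c (n₀ + ((M - 1 + (i : ℕ) + (t : ℕ) : ℕ) : ℤ)) := rfl
        rw [e]
        congr 1
        push_cast
        ring
      calc ∑ t : Fin M, c (n₀ + ((M - 1 : ℕ) : ℤ) + (i : ℕ) + (t : ℕ))
            * Q1.coeff (M - 1 - (t : ℕ))
          = ∑ t : Fin M, a (M - 1 + i + t) * Q1.coeff (M - 1 - (t : ℕ)) := by
            exact Finset.sum_congr rfl fun t _ => by rw [hent t]
        _ = ∑ t ∈ Finset.range M, a (M - 1 + i + t) * Q1.coeff (M - 1 - t) := by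
            exact Fin.sum_univ_eq_sum_range (fun t => a (M - 1 + i + t) * Q1.coeff (M - 1 - t)) M
        _ = ∑ j ∈ Finset.range M, Q1.coeff j * a ((2 * (M - 1) + i) - j) := by
            rw [← Finset.sum_range_reflect]
            refine Finset.sum_congr rfl fun j hj => ?_
            have hjM : j < M := Finset.mem_range.mp hj
            rw [show M - 1 - (M - 1 - j) = j by omega,
              show M - 1 + i + (M - 1 - j) = 2 * (M - 1) + i - j by omega, mul_comm]
        _ = 0 := hS1 (2 * (M - 1) + i) (by omega)
  obtain ⟨A, B, hAB⟩ := hco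
  have hQps0 : PowerSeries.constantCoeff (Q : PowerSeries k') ≠ 0 := by
    rw [← PowerSeries.coeff_zero_eq_constantCoeff, Polynomial.coeff_coe, hQ0]
    exact one_ne_zero
  set hps : PowerSeries k' := (Q : PowerSeries k')⁻¹ with hhdef
  have hQh : (Q : PowerSeries k') * hps = 1 := PowerSeries.mul_inv_cancel _ hQps0
  have hQpsne : (Q : PowerSeries k') ≠ 0 := fun h => hQne (Polynomial.coe_eq_zero_iff.mp h)
  have hhval : hps = (A : PowerSeries k') * f + (B : PowerSeries k') := by
    have e1 : ((A : PowerSeries k') * f + (B : PowerSeries k')) * (Q : PowerSeries k') = 1 := by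
      have : ((A : PowerSeries k') * f + (B : PowerSeries k')) * (Q : PowerSeries k')
          = (A : PowerSeries k') * ((Q : PowerSeries k') * f)
            + (B : PowerSeries k') * (Q : PowerSeries k') := by ring
      rw [this, hQf, ← Polynomial.coe_mul, ← Polynomial.coe_mul, ← Polynomial.coe_add, hAB,
        Polynomial.coe_one]
    have e2 : hps * (Q : PowerSeries k') = 1 := by rw [mul_comm]; exact hQh
    exact (mul_right_cancel₀ hQpsne (e1.trans e2.symm)).symm
  set u : ℕ → k' := fun n => PowerSeries.coeff n hps with hu
  have hu0 : u 0 = 1 := by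
    rw [hu]
    simp only [hhdef]
    rw [PowerSeries.coeff_zero_eq_constantCoeff, PowerSeries.constantCoeff_inv,
      ← PowerSeries.coeff_zero_eq_constantCoeff, Polynomial.coeff_coe, hQ0, inv_one]
  -- common denominator
  obtain ⟨d, hdO, hd0, hdmem⟩ := RecAux.exists_common_denom O
    ((Finset.range (A.natDegree + 1)).image A.coeff ∪
     (Finset.range (B.natDegree + 1)).image B.coeff)
  have hdA : ∀ j, d * A.coeff j ∈ O := by
    intro j
    by_cases hj : j ≤ A.natDegree
    · exact hdmem _ (Finset.mem_union_left _
        (Finset.mem_image.mpr ⟨j, Finset.mem_range.mpr (by omega), rfl⟩))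
    · rw [Polynomial.coeff_eq_zero_of_natDegree_lt (by omega), mul_zero]
      exact zero_mem _
  have hdB : ∀ j, d * B.coeff j ∈ O := by
    intro j
    by_cases hj : j ≤ B.natDegree
    · exact hdmem _ (Finset.mem_union_right _
        (Finset.mem_image.mpr ⟨j, Finset.mem_range.mpr (by omega), rfl⟩))
    · rw [Polynomial.coeff_eq_zero_of_natDegree_lt (by omega), mul_zero]
      exact zero_mem _
  have hdu : ∀ n, d * u n ∈ O := by
    intro n
    show d * PowerSeries.coeff n hps ∈ O
    rw [hhval, map_add, Polynomial.coeff_coe, hcoefmulf, mul_add, Finset.mul_sum]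
    apply add_mem
    · apply sum_mem
      intro j _
      rw [show d * (A.coeff j * a (n - j)) = (d * A.coeff j) * a (n - j) by ring]
      exact mul_mem (hdA j) (haO _)
    · exact hdB n
  have hrel : ∀ n : ℕ, 1 ≤ n →
      ∑ j ∈ Finset.range (M + 1), (if j ≤ n then Q.coeff j * u (n - j) else 0) = 0 := by
    intro n hn
    set F : ℕ → k' := fun j => if j ≤ n then Q.coeff j * u (n - j) else 0 with hF
    have hFz : ∀ j, M + 1 ≤ j → F j = 0 := by
      intro j hj
      show (if j ≤ n then Q.coeff j * u (n - j) else 0) = 0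
      rw [hQtop j (by omega), zero_mul, ite_self]
    have e3 : ∑ j ∈ Finset.range (M + 1), F j
        = ∑ j ∈ Finset.range (max (M + 1) (n + 1)), F j :=
      Finset.sum_subset (Finset.range_subset_range.mpr (le_max_left _ _))
        (fun j _ hj => hFz j (by simp only [Finset.mem_range] at hj; omega))
    have e4 : ∑ j ∈ Finset.range (n + 1), F j
        = ∑ j ∈ Finset.range (max (M + 1) (n + 1)), F j := by
      apply Finset.sum_subset (Finset.range_subset_range.mpr (le_max_right _ _))
      intro j _ hj
      show (if j ≤ n then Q.coeff j * u (n - j) else 0) = 0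
      rw [if_neg (by simp only [Finset.mem_range] at hj; omega)]
    have e5 : ∑ j ∈ Finset.range (n + 1), F j
        = PowerSeries.coeff n ((Q : PowerSeries k') * hps) := by
      rw [hcoefmul]
      refine Finset.sum_congr rfl fun j hj => ?_
      show (if j ≤ n then Q.coeff j * u (n - j) else 0) = _
      rw [if_pos (by simp only [Finset.mem_range] at hj; omega)]
    have hn0 : n ≠ 0 := by omega
    rw [e3, ← e4, e5, hQh]
    simp [PowerSeries.coeff_one, hn0]
  have hall := RecAux.coeffs_mem O M (fun j => Q.coeff j) u hQ0 hu0 d hdO hd0 hdu hrel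
  intro i hi1 hiM
  have h1 : Q.coeff i ∈ O := hall i hiM
  have h2 := neg_mem h1
  rwa [hQj i hi1 hiM, neg_neg] at h2
end

section
/- Let (c_n)_{n∈ℤ} satisfy the order-M linear recurrence with r_M ≠ 0 over a field K, and suppose the Hankel matrix C_{t_0} = (c_{t_0+i+j})_{0≤i,j≤M-1} is nonsingular. Then the polynomials p_{t}(X) and q(X) (with p_t q-numerator as above, q(X) = 1 - Σ r_i X^i) are relatively prime in K[X] for each t ≥ t_0; in particular they have no common root in an algebraic closure of K. -/
open Polynomial

private def coefA {K : Type*} [Field K] (r : ℕ → K) (c : ℤ → K) (s : ℤ) (j : ℕ) : K :=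
  c (s + j) - ∑ i ∈ Finset.range j, r (i + 1) * c (s + j - (i + 1 : ℕ))

private lemma coefA_zero {K : Type*} [Field K] (r : ℕ → K) (c : ℤ → K) (s : ℤ) :
    coefA r c s 0 = c s := by
  simp [coefA]

private lemma coefA_succ {K : Type*} [Field K] (r : ℕ → K) (c : ℤ → K) (s : ℤ) (j : ℕ) :
    coefA r c s (j + 1) = coefA r c (s + 1) j - r (j + 1) * c s := by
  unfold coefA
  rw [Finset.sum_range_succ]
  have e1 : s + ((j : ℕ) + 1 : ℕ) = s + 1 + (j : ℕ) := by push_cast; ring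
  have e2 : s + ((j : ℕ) + 1 : ℕ) - ((j : ℕ) + 1 : ℕ) = s := by push_cast; ring
  have e3 : ∀ i : ℕ, s + ((j : ℕ) + 1 : ℕ) - ((i : ℕ) + 1 : ℕ)
      = s + 1 + (j : ℕ) - ((i : ℕ) + 1 : ℕ) := by intro i; push_cast; ring
  rw [e2, e1]
  ring

private lemma tri_swap {β : Type*} [AddCommMonoid β] (n : ℕ) (g : ℕ → ℕ → β) :
    (∑ j ∈ Finset.range n, ∑ l ∈ Finset.range j, g l (j - l - 1))
      = ∑ k ∈ Finset.range n, ∑ l ∈ Finset.range (n - 1 - k), g l k := by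
  rw [Finset.sum_sigma', Finset.sum_sigma']
  refine Finset.sum_nbij' (fun x : (Σ _ : ℕ, ℕ) => (⟨x.1 - x.2 - 1, x.2⟩ : Σ _ : ℕ, ℕ))
      (fun x : (Σ _ : ℕ, ℕ) => (⟨x.2 + x.1 + 1, x.2⟩ : Σ _ : ℕ, ℕ)) ?_ ?_ ?_ ?_ ?_
  · rintro ⟨a, b⟩ h
    simp only [Finset.mem_sigma, Finset.mem_range] at h ⊢
    omega
  · rintro ⟨a, b⟩ h
    simp only [Finset.mem_sigma, Finset.mem_range] at h ⊢
    omega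
  · rintro ⟨a, b⟩ h
    simp only [Finset.mem_sigma, Finset.mem_range] at h
    have hb : b + (a - b - 1) + 1 = a := by omega
    simp only [hb]
  · rintro ⟨a, b⟩ h
    simp only [Finset.mem_sigma, Finset.mem_range] at h
    have hb : b + a + 1 - b - 1 = a := by omega
    simp only [hb]
  · rintro ⟨a, b⟩ h
    rfl

private lemma step_eval {K L : Type*} [Field K] [Field L] (f : K →+* L)
    (N : ℕ) (r : ℕ → K) (c : ℤ → K)
    (hrec : ∀ n : ℤ, c n = ∑ i ∈ Finset.range (N + 1), r (i + 1) * c (n - (i + 1 : ℕ)))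
    (α : L) (s : ℤ) :
    ∑ j ∈ Finset.range (N + 1), f (coefA r c s j) * α ^ j
      = f (c s) * (1 - ∑ i ∈ Finset.range (N + 1), f (r (i + 1)) * α ^ (i + 1))
        + α * ∑ j ∈ Finset.range (N + 1), f (coefA r c (s + 1) j) * α ^ j := by
  have hA_last : coefA r c (s + 1) N = r (N + 1) * c s := by
    have h := hrec (s + 1 + N)
    rw [Finset.sum_range_succ] at h
    have e2 : s + 1 + (N : ℕ) - ((N : ℕ) + 1 : ℕ) = s := by push_cast; ring
    rw [e2] at h
    unfold coefA
    rw [h]; ring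
  rw [Finset.sum_range_succ']
  have e1 : ∀ j ∈ Finset.range N, f (coefA r c s (j + 1)) * α ^ (j + 1)
      = α * (f (coefA r c (s + 1) j) * α ^ j) - f (c s) * (f (r (j + 1)) * α ^ (j + 1)) := by
    intro j _
    rw [coefA_succ, map_sub, map_mul]
    ring
  rw [Finset.sum_congr rfl e1, Finset.sum_sub_distrib, ← Finset.mul_sum, ← Finset.mul_sum,
    coefA_zero, Finset.sum_range_succ (fun j => f (coefA r c (s + 1) j) * α ^ j),
    Finset.sum_range_succ (fun i => f (r (i + 1)) * α ^ (i + 1)), hA_last, map_mul]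
  ring

private lemma row_eval {K L : Type*} [Field K] [Field L] (f : K →+* L)
    (N : ℕ) (r : ℕ → K) (c : ℤ → K) (α : L) (s : ℤ) :
    ∑ j ∈ Finset.range (N + 1), f (coefA r c s j) * α ^ j
      = ∑ k ∈ Finset.range (N + 1), f (c (s + k)) *
          (α ^ k - ∑ l ∈ Finset.range (N - k), f (r (l + 1)) * α ^ (k + l + 1)) := by
  set G : ℕ → ℕ → L := fun l k => f (r (l + 1)) * f (c (s + (k : ℕ))) * α ^ (k + l + 1) with hG
  have e0 : ∀ j ∈ Finset.range (N + 1), f (coefA r c s j) * α ^ j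
      = f (c (s + j)) * α ^ j - ∑ l ∈ Finset.range j, G l (j - l - 1) := by
    intro j _
    unfold coefA
    rw [map_sub, map_sum, sub_mul, Finset.sum_mul]
    congr 1
    refine Finset.sum_congr rfl fun l hl => ?_
    have hlj : l < j := Finset.mem_range.mp hl
    have harg : s + (j : ℤ) - ((l + 1 : ℕ) : ℤ) = s + ((j - l - 1 : ℕ) : ℤ) := by omega
    have hexp2 : j - l - 1 + l + 1 = j := by omega
    rw [map_mul, harg]
    simp only [hG]
    rw [hexp2]
  rw [Finset.sum_congr rfl e0, Finset.sum_sub_distrib, tri_swap (N + 1) G]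
  have e3 : ∀ k ∈ Finset.range (N + 1), f (c (s + k)) *
      (α ^ k - ∑ l ∈ Finset.range (N - k), f (r (l + 1)) * α ^ (k + l + 1))
      = f (c (s + k)) * α ^ k - ∑ l ∈ Finset.range (N + 1 - 1 - k), G l k := by
    intro k _
    simp only [Nat.add_sub_cancel]
    rw [mul_sub, Finset.mul_sum]
    congr 1
    refine Finset.sum_congr rfl fun l _ => ?_
    simp only [hG]
    ring
  rw [Finset.sum_congr rfl e3, Finset.sum_sub_distrib]

/-- If the Hankel matrix `C_{t₀}` of a linearly recurrent sequence is nonsingular, then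
for every `t ≥ t₀` the numerator `p_t` and the denominator `q` of the generating
function are coprime; in particular they have no common root in an algebraic closure. -/
theorem numerator_denominator_coprime
    (K : Type*) [Field K]
    (M : ℕ) (r : ℕ → K) (c : ℤ → K) (hrM : r M ≠ 0)
    (hrec : ∀ n : ℤ, c n = ∑ i ∈ Finset.range M, r (i + 1) * c (n - (i + 1 : ℕ)))
    (p : ℤ → Polynomial K)
    (hp : ∀ t : ℤ, p t = ∑ j ∈ Finset.range M,
        C (c (t + j) - ∑ i ∈ Finset.range j, r (i + 1) * c (t + j - (i + 1 : ℕ))) * X ^ j)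
    (q : Polynomial K)
    (hq : q = 1 - ∑ i ∈ Finset.range M, C (r (i + 1)) * X ^ (i + 1))
    (t₀ : ℤ)
    (hHankel : (Matrix.of fun i j : Fin M => c (t₀ + (i : ℕ) + (j : ℕ))).det ≠ 0) :
    ∀ t : ℤ, t₀ ≤ t → IsCoprime (p t) q ∧
      ∀ α : AlgebraicClosure K, ¬ (aeval α (p t) = 0 ∧ aeval α q = 0) := by
  intro t ht
  rcases Nat.eq_zero_or_pos M with hM0 | hMpos
  · subst hM0
    rw [hq]
    simp only [Finset.range_zero, Finset.sum_empty, sub_zero]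
    refine ⟨isCoprime_one_right, ?_⟩
    rintro α ⟨-, h2⟩
    simp at h2
  obtain ⟨N, rfl⟩ : ∃ N, M = N + 1 := ⟨M - 1, by omega⟩
  set f := algebraMap K (AlgebraicClosure K) with hf
  have hqne : q ≠ 0 := by
    intro h0
    have h1 : eval 0 q = 1 := by rw [hq]; simp [Polynomial.eval_finset_sum]
    rw [h0] at h1
    simp at h1
  have haev : ∀ (s : ℤ) (α : AlgebraicClosure K),
      aeval α (p s) = ∑ j ∈ Finset.range (N + 1), f (coefA r c s j) * α ^ j := by
    intro s α
    rw [hp s]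
    simp only [map_sum, map_mul, map_pow, aeval_C, aeval_X]
    rfl
  have haevq : ∀ α : AlgebraicClosure K,
      aeval α q = 1 - ∑ i ∈ Finset.range (N + 1), f (r (i + 1)) * α ^ (i + 1) := by
    intro α
    rw [hq]
    simp only [map_sub, map_one, map_sum, map_mul, map_pow, aeval_C, aeval_X]
    rfl
  have hcore : ∀ α : AlgebraicClosure K,
      aeval α (p t) = 0 → aeval α q = 0 → False := by
    intro α hpt hqt
    have hα : α ≠ 0 := by
      intro h0
      rw [haevq] at hqt
      rw [h0] at hqt
      simp at hqt
    have hstep : ∀ s : ℤ, aeval α (p s) = α * aeval α (p (s + 1)) := by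
      intro s
      have hse := step_eval f N r c hrec α s
      rw [← haev, ← haev, ← haevq α, hqt] at hse
      rw [hse]
      ring
    have fwd : ∀ n : ℕ, aeval α (p (t + n)) = 0 := by
      intro n
      induction n with
      | zero => simpa using hpt
      | succ n ih =>
        have h1 := hstep (t + n)
        rw [ih] at h1
        have h2 : aeval α (p (t + (n : ℤ) + 1)) = 0 := by
          rcases mul_eq_zero.mp h1.symm with h | h
          · exact absurd h hα
          · exact h
        have e : t + ((n + 1 : ℕ) : ℤ) = t + (n : ℤ) + 1 := by push_cast; ring
        rw [e]
        exact h2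
    have bwd : ∀ n : ℕ, aeval α (p (t - n)) = 0 := by
      intro n
      induction n with
      | zero => simpa using hpt
      | succ n ih =>
        have h1 := hstep (t - ((n + 1 : ℕ) : ℤ))
        have e : t - ((n + 1 : ℕ) : ℤ) + 1 = t - (n : ℤ) := by push_cast; ring
        rw [e, ih, mul_zero] at h1
        exact h1
    have hall : ∀ s : ℤ, aeval α (p s) = 0 := by
      intro s
      rcases le_or_gt t s with h | h
      · have hs := fwd (s - t).toNat
        rwa [show t + (((s - t).toNat : ℕ) : ℤ) = s by omega] at hs
      · have hs := bwd (t - s).toNat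
        rwa [show t - (((t - s).toNat : ℕ) : ℤ) = s by omega] at hs
    have hdet : ((Matrix.of fun i j : Fin (N + 1) => c (t₀ + (i : ℕ) + (j : ℕ))).map f).det ≠ 0 := by
      have hmd := RingHom.map_det f (Matrix.of fun i j : Fin (N + 1) => c (t₀ + (i : ℕ) + (j : ℕ)))
      rw [show (RingHom.mapMatrix f) (Matrix.of fun i j : Fin (N + 1) => c (t₀ + (i : ℕ) + (j : ℕ)))
        = (Matrix.of fun i j : Fin (N + 1) => c (t₀ + (i : ℕ) + (j : ℕ))).map f from rfl] at hmd
      rw [← hmd]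
      intro h0
      exact hHankel (f.injective (by rw [h0, map_zero]))
    have hmv : ((Matrix.of fun i j : Fin (N + 1) => c (t₀ + (i : ℕ) + (j : ℕ))).map f).mulVec
        (fun k : Fin (N + 1) => α ^ (k : ℕ)
          - ∑ l ∈ Finset.range (N - (k : ℕ)), f (r (l + 1)) * α ^ ((k : ℕ) + l + 1)) = 0 := by
      funext i
      have hz : ∑ k ∈ Finset.range (N + 1), f (c (t₀ + (i : ℕ) + k)) *
          (α ^ k - ∑ l ∈ Finset.range (N - k), f (r (l + 1)) * α ^ (k + l + 1)) = 0 := by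
        rw [← row_eval f N r c α (t₀ + (i : ℕ)), ← haev, hall]
      have hfin := Fin.sum_univ_eq_sum_range (fun k : ℕ => f (c (t₀ + (i : ℕ) + k)) *
          (α ^ k - ∑ l ∈ Finset.range (N - k), f (r (l + 1)) * α ^ (k + l + 1))) (N + 1)
      simp only [Matrix.mulVec, dotProduct, Matrix.map_apply, Matrix.of_apply,
        Pi.zero_apply]
      exact hfin.trans hz
    have hker := Matrix.eq_zero_of_mulVec_eq_zero hdet hmv
    have hlast := congrFun hker ⟨N, by omega⟩
    simp only [Pi.zero_apply, Nat.sub_self, Finset.range_zero, Finset.sum_empty,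
      sub_zero] at hlast
    exact pow_ne_zero N hα hlast
  constructor
  · by_contra hnc
    classical
    have hdq : EuclideanDomain.gcd (p t) q ∣ q := EuclideanDomain.gcd_dvd_right _ _
    have hdp : EuclideanDomain.gcd (p t) q ∣ p t := EuclideanDomain.gcd_dvd_left _ _
    have hd0 : EuclideanDomain.gcd (p t) q ≠ 0 := fun h =>
      hqne (EuclideanDomain.gcd_eq_zero_iff.mp h).2
    have hdu : ¬ IsUnit (EuclideanDomain.gcd (p t) q) := fun h =>
      hnc (EuclideanDomain.gcd_isUnit_iff.mp h)
    have hdeg : (EuclideanDomain.gcd (p t) q).degree ≠ 0 := fun h =>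
      hdu (Polynomial.isUnit_iff_degree_eq_zero.mpr h)
    have hdeg' : ((EuclideanDomain.gcd (p t) q).map f).degree ≠ 0 := by
      rwa [Polynomial.degree_map]
    obtain ⟨x, hx⟩ := IsAlgClosed.exists_root _ hdeg'
    have hax : aeval x (EuclideanDomain.gcd (p t) q) = 0 := by
      rw [aeval_def, ← Polynomial.eval_map]
      exact hx
    obtain ⟨e, he⟩ := hdp
    obtain ⟨e', he'⟩ := hdq
    exact hcore x (by rw [he, map_mul, hax, zero_mul]) (by rw [he', map_mul, hax, zero_mul])
  · rintro α ⟨h1, h2⟩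
    exact hcore α h1 h2
end

section
/- If α ≠ 0 is a common root of q(X) = 1 - Σ_{i=1}^M r_i X^i and of p_t(X) for every t ≥ t_0 (where p_t is the numerator of the generating function of a sequence c satisfying the order-M recurrence), then the columns of the Hankel matrix C_{t_0} = (c_{t_0+i+j}) are linearly dependent, i.e., det C_{t_0} = 0. -/
open Polynomial

/-- If `α ≠ 0` is a common root of `q` and of `p_t` for every `t ≥ t₀`, then the
Hankel matrix `C_{t₀}` is singular: `det C_{t₀} = 0`. -/
theorem common_root_implies_hankel_singular
    (K : Type*) [Field K]
    (M : ℕ) (r : ℕ → K) (c : ℤ → K) (hrM : r M ≠ 0)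
    (hrec : ∀ n : ℤ, c n = ∑ i ∈ Finset.range M, r (i + 1) * c (n - (i + 1 : ℕ)))
    (p : ℤ → Polynomial K)
    (hp : ∀ t : ℤ, p t = ∑ j ∈ Finset.range M,
        C (c (t + j) - ∑ i ∈ Finset.range j, r (i + 1) * c (t + j - (i + 1 : ℕ))) * X ^ j)
    (q : Polynomial K)
    (hq : q = 1 - ∑ i ∈ Finset.range M, C (r (i + 1)) * X ^ (i + 1))
    (α : K) (hα : α ≠ 0) (hqα : q.eval α = 0)
    (t₀ : ℤ) (hpα : ∀ t : ℤ, t₀ ≤ t → (p t).eval α = 0) :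
    (Matrix.of fun i j : Fin M => c (t₀ + (i : ℕ) + (j : ℕ))).det = 0 := by
  rcases Nat.eq_zero_or_pos M with hM | hM
  · exfalso
    subst hM
    simp [hq] at hqα
  · rw [← Matrix.exists_mulVec_eq_zero_iff]
    refine ⟨fun j => α ^ (j : ℕ) -
        ∑ i ∈ Finset.range (M - 1 - (j : ℕ)), r (i + 1) * α ^ ((j : ℕ) + i + 1), ?_, ?_⟩
    · intro h
      have h2 := congrFun h ⟨M - 1, by omega⟩
      simp only [Pi.zero_apply] at h2
      rw [show M - 1 - (M - 1) = 0 from by omega] at h2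
      simp at h2
      exact hα h2.1
    · funext i
      have hpe : (p (t₀ + (i : ℕ))).eval α = 0 := hpα _ (by omega)
      set t : ℤ := t₀ + (i : ℕ) with ht
      rw [hp] at hpe
      simp only [eval_finset_sum, eval_mul, eval_C, eval_pow, eval_X, sub_mul,
        Finset.sum_sub_distrib] at hpe
      have hswap :
          ∑ j ∈ Finset.range M, (∑ k ∈ Finset.range j,
              r (k + 1) * c (t + j - (k + 1 : ℕ))) * α ^ j
        = ∑ j ∈ Finset.range M, c (t + j) *
            ∑ k ∈ Finset.range (M - 1 - j), r (k + 1) * α ^ (j + k + 1) := by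
        simp only [Finset.sum_mul, Finset.mul_sum]
        rw [Finset.sum_sigma', Finset.sum_sigma']
        refine Finset.sum_nbij' (fun x => ⟨x.1 - x.2 - 1, x.2⟩)
          (fun x => ⟨x.1 + x.2 + 1, x.2⟩) ?_ ?_ ?_ ?_ ?_
        · rintro ⟨j, k⟩ hx
          simp only [Finset.mem_sigma, Finset.mem_range] at hx ⊢
          omega
        · rintro ⟨j, k⟩ hx
          simp only [Finset.mem_sigma, Finset.mem_range] at hx ⊢
          omega
        · rintro ⟨j, k⟩ hx
          simp only [Finset.mem_sigma, Finset.mem_range] at hx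
          simp only [Sigma.mk.inj_iff, heq_eq_eq, and_true]
          omega
        · rintro ⟨j, k⟩ hx
          simp only [Finset.mem_sigma, Finset.mem_range] at hx
          simp only [Sigma.mk.inj_iff, heq_eq_eq, and_true]
          omega
        · rintro ⟨j, k⟩ hx
          simp only [Finset.mem_sigma, Finset.mem_range] at hx
          have h1 : ((j : ℤ)) - ((k : ℕ) + 1 : ℕ) = ((j - k - 1 : ℕ) : ℤ) := by
            push_cast; omega
          have h2 : j - k - 1 + k + 1 = j := by omega
          rw [h2]
          rw [show t + (j : ℕ) - ((k + 1 : ℕ) : ℤ) = t + ((j - k - 1 : ℕ) : ℤ) from by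
            push_cast; omega]
          ring
      have key : ∑ j ∈ Finset.range M, c (t + j) *
          (α ^ j - ∑ k ∈ Finset.range (M - 1 - j), r (k + 1) * α ^ (j + k + 1)) = 0 := by
        simp only [mul_sub, Finset.sum_sub_distrib]
        rw [← hswap]
        simpa using hpe
      simp only [Matrix.mulVec, Matrix.of_apply, Pi.zero_apply, dotProduct]
      rw [Fin.sum_univ_eq_sum_range (fun j => c (t₀ + (i : ℕ) + j) *
        (α ^ j - ∑ k ∈ Finset.range (M - 1 - j), r (k + 1) * α ^ (j + k + 1)))]
      exact key
end
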